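/- Let (a_p)_p and (b_p)_p be integer sequences indexed by primes such that a_p → ∞, b_p → ∞, and for every positive integer d, a_p^d = o(p) and b_p^d = o(a_p) as p → ∞. Then for every nonzero polynomial F(x,y) with integer coefficients, F(a_p, b_p) ≢ 0 (mod p) for infinitely many primes p. -/

import Mathlib

open Filter Asymptotics

instance : LinearOrder Nat.Primes := inferInstanceAs (LinearOrder {p : ℕ // p.Prime})

open Polynomial
set_option maxHeartbeats 1000000


instance : Infinite Nat.Primes := Nat.infinite_setOf_prime.to_subtype

noncomputable def e1 : MvPolynomial (Fin 1) ℤ →+* Polynomial ℤ :=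
  (Polynomial.mapRingHom (MvPolynomial.eval (![] : Fin 0 → ℤ) : MvPolynomial (Fin 0) ℤ →+* ℤ)).comp
    (MvPolynomial.finSuccEquiv ℤ 0).toAlgHom.toRingHom

lemma e1_eval (g : MvPolynomial (Fin 1) ℤ) (B : ℤ) :
    Polynomial.eval B (e1 g) = MvPolynomial.eval ![B] g := by
  have h := MvPolynomial.eval_eq_eval_mv_eval' (![] : Fin 0 → ℤ) B g
  have h2 : (Fin.cons B (![] : Fin 0 → ℤ) : Fin 1 → ℤ) = ![B] := rfl
  rw [h2] at h
  rw [h]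
  rfl

lemma e1_inj : Function.Injective e1 := by
  have h0 : Function.Injective (MvPolynomial.eval (![] : Fin 0 → ℤ) : MvPolynomial (Fin 0) ℤ →+* ℤ) := by
    intro x y hxy
    obtain ⟨cx, rfl⟩ := MvPolynomial.C_surjective (Fin 0) x
    obtain ⟨cy, rfl⟩ := MvPolynomial.C_surjective (Fin 0) y
    simpa using hxy
  exact (Polynomial.map_injective _ h0).comp (MvPolynomial.finSuccEquiv ℤ 0).injective

lemma primes_infinite_of_eventually {S : Set Nat.Primes} (h : ∀ᶠ p in atTop, p ∈ S) :
    S.Infinite := by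
  obtain ⟨N, hN⟩ := eventually_atTop.mp h
  refine Set.Infinite.mono (fun p hp => hN p hp : Set.Ici N ⊆ S) ?_
  intro hfin
  have h1 : (Set.Iio N).Finite := by
    refine Set.Finite.subset ((Set.finite_Iio (N : ℕ)).preimage
      (Set.injOn_of_injective (fun x y hxy => Subtype.ext hxy))) ?_
    intro p hp
    exact hp
  have := Set.infinite_univ (α := Nat.Primes)
  rw [← Set.Iio_union_Ici (a := N)] at this
  exact this (h1.union hfin)



noncomputable instance : Infinite Nat.Primes := Nat.infinite_setOf_prime.to_subtype

-- bound lemma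
lemma intPolyBound (g : Polynomial ℤ) : ∃ C : ℤ, 0 ≤ C ∧
    ∀ t : ℤ, 1 ≤ |t| → ∀ K, g.natDegree ≤ K → |g.eval t| ≤ C * |t| ^ K := by
  refine ⟨∑ i ∈ Finset.range (g.natDegree + 1), |g.coeff i|, Finset.sum_nonneg fun i _ => abs_nonneg _, ?_⟩
  intro t ht K hK
  rw [Polynomial.eval_eq_sum_range, Finset.sum_mul]
  refine (Finset.abs_sum_le_sum_abs _ _).trans (Finset.sum_le_sum fun i hi => ?_)
  rw [abs_mul, abs_pow]
  refine mul_le_mul_of_nonneg_left ?_ (abs_nonneg _)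
  exact pow_le_pow_right₀ ht (by have := Finset.mem_range.mp hi; omega)

lemma keyLemma (a b : Nat.Primes → ℤ)
    (ha : Tendsto a atTop atTop) (hb : Tendsto b atTop atTop)
    (hao : ∀ d : ℕ, 0 < d →
      (fun p : Nat.Primes => (a p : ℝ) ^ d) =o[atTop] (fun p : Nat.Primes => (p : ℝ)))
    (hbo : ∀ d : ℕ, 0 < d →
      (fun p : Nat.Primes => (b p : ℝ) ^ d) =o[atTop] (fun p : Nat.Primes => (a p : ℝ)))
    (Q : Polynomial (Polynomial ℤ)) (hQ : Q ≠ 0) :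
    ∀ᶠ p : Nat.Primes in atTop,
      ¬ ((p : ℕ) : ℤ) ∣ (Q.map (Polynomial.evalRingHom (b p))).eval (a p) := by
  classical
  set d := Q.natDegree with hd
  -- constants
  have hCs : ∀ i : ℕ, ∃ C : ℤ, 0 ≤ C ∧
      ∀ t : ℤ, 1 ≤ |t| → ∀ K, (Q.coeff i).natDegree ≤ K → |(Q.coeff i).eval t| ≤ C * |t| ^ K :=
    fun i => intPolyBound _
  choose Cf hCf0 hCf using hCs
  set C : ℤ := (∑ i ∈ Finset.range (d+1), Cf i) + 1 with hC
  have hC1 : 1 ≤ C := by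
    have : 0 ≤ ∑ i ∈ Finset.range (d+1), Cf i := Finset.sum_nonneg fun i _ => hCf0 i
    omega
  have hCi : ∀ i ∈ Finset.range (d+1), Cf i ≤ C := by
    intro i hi
    have := Finset.single_le_sum (f := Cf) (fun j _ => hCf0 j) hi
    omega
  set K : ℕ := 1 + ∑ i ∈ Finset.range (d+1), (Q.coeff i).natDegree with hKdef
  have hKi : ∀ i ∈ Finset.range (d+1), (Q.coeff i).natDegree ≤ K := by
    intro i hi
    have h := Finset.single_le_sum (f := fun i => (Q.coeff i).natDegree) (fun j _ => Nat.zero_le _) hi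
    omega
  -- the big eventual constant
  set M : ℤ := 2 * (d+1) * C with hM
  have hM2 : 2 ≤ M := by nlinarith
  -- eventual facts
  have h1 : ∀ᶠ p : Nat.Primes in atTop, 1 ≤ a p := ha.eventually_ge_atTop 1
  have h3 : ∀ᶠ p : Nat.Primes in atTop, 1 ≤ b p := hb.eventually_ge_atTop 1
  -- leading coeff nonvanishing
  have h2 : ∀ᶠ p : Nat.Primes in atTop, (Q.coeff d).eval (b p) ≠ 0 := by
    have hld : Q.coeff d ≠ 0 := by
      simpa [hd] using Polynomial.leadingCoeff_ne_zero.mpr hQ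
    have hfin : Set.Finite {t : ℤ | (Q.coeff d).IsRoot t} := Polynomial.finite_setOf_isRoot hld
    obtain ⟨N, hN⟩ := hfin.bddAbove
    filter_upwards [hb.eventually_gt_atTop N] with p hp hroot
    exact absurd (hN hroot) (not_le.mpr hp)
  -- real littleO facts
  have h4 : ∀ᶠ p : Nat.Primes in atTop, M * |b p| ^ K ≤ |a p| := by
    have hKpos : 0 < K := by omega
    have hMpos : (0:ℝ) < (M:ℝ) := by exact_mod_cast (by omega : (0:ℤ) < M)
    have := (hbo K hKpos).def (by positivity : (0:ℝ) < (M:ℝ)⁻¹)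
    filter_upwards [this] with p hp
    rw [Real.norm_eq_abs, Real.norm_eq_abs, abs_pow] at hp
    have : (M:ℝ) * |(b p : ℝ)| ^ K ≤ |(a p : ℝ)| := by
      rw [inv_mul_eq_div] at hp
      calc (M:ℝ) * |(b p : ℝ)| ^ K ≤ (M:ℝ) * (|(a p:ℝ)| / M) := by
            exact mul_le_mul_of_nonneg_left hp (le_of_lt hMpos)
        _ = |(a p : ℝ)| := by field_simp
    exact_mod_cast (by push_cast; exact this : ((M * |b p| ^ K : ℤ) : ℝ) ≤ ((|a p| : ℤ) : ℝ))
  have h5 : ∀ᶠ p : Nat.Primes in atTop, M * |a p| ^ (d+1) ≤ ((p:ℕ):ℤ) := by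
    have hMpos : (0:ℝ) < (M:ℝ) := by exact_mod_cast (by omega : (0:ℤ) < M)
    have := (hao (d+1) (Nat.succ_pos d)).def (by positivity : (0:ℝ) < (M:ℝ)⁻¹)
    filter_upwards [this] with p hp
    rw [Real.norm_eq_abs, Real.norm_eq_abs, abs_pow] at hp
    have hppos : (0:ℝ) ≤ ((p:ℕ):ℝ) := by positivity
    rw [abs_of_nonneg hppos, inv_mul_eq_div] at hp
    have : (M:ℝ) * |(a p : ℝ)| ^ (d+1) ≤ ((p:ℕ):ℝ) := by
      calc (M:ℝ) * |(a p : ℝ)| ^ (d+1) ≤ (M:ℝ) * (((p:ℕ):ℝ) / M) :=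
            mul_le_mul_of_nonneg_left hp (le_of_lt hMpos)
        _ = ((p:ℕ):ℝ) := by field_simp
    exact_mod_cast (by push_cast; exact this : ((M * |a p| ^ (d+1) : ℤ) : ℝ) ≤ (((p:ℕ):ℤ) : ℝ))
  filter_upwards [h1, h2, h3, h4, h5] with p hA hgd hB h4 h5
  set A := a p with hAdef
  set B := b p with hBdef
  set v : ℤ := (Q.map (Polynomial.evalRingHom B)).eval A with hv
  have hA0 : (1:ℤ) ≤ |A| := le_trans hA (le_abs_self A)
  have hB0 : (1:ℤ) ≤ |B| := le_trans hB (le_abs_self B)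
  have hBK : (1:ℤ) ≤ |B| ^ K := one_le_pow₀ hB0
  -- expand v as a sum
  have hvsum : v = ∑ i ∈ Finset.range (d+1), (Q.coeff i).eval B * A ^ i := by
    rw [hv, Polynomial.eval_eq_sum_range' (lt_of_le_of_lt Polynomial.natDegree_map_le (Nat.lt_succ_self d))]
    refine Finset.sum_congr rfl fun i _ => by rw [Polynomial.coeff_map, Polynomial.coe_evalRingHom]
  -- coefficient bounds
  have hterm : ∀ i ∈ Finset.range (d+1), |(Q.coeff i).eval B * A ^ i| ≤ C * |B| ^ K * |A| ^ i := by
    intro i hi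
    rw [abs_mul, abs_pow]
    refine mul_le_mul_of_nonneg_right ?_ (pow_nonneg (abs_nonneg _) _)
    calc |(Q.coeff i).eval B| ≤ Cf i * |B| ^ K := hCf i B hB0 K (hKi i hi)
      _ ≤ C * |B| ^ K := mul_le_mul_of_nonneg_right (hCi i hi) (le_trans zero_le_one hBK)
  -- claim 2 : |v| < p
  have hvle : |v| ≤ |A| ^ (d+1) := by
    have : |v| ≤ ∑ i ∈ Finset.range (d+1), C * |B| ^ K * |A| ^ i := by
      rw [hvsum]
      exact (Finset.abs_sum_le_sum_abs _ _).trans (Finset.sum_le_sum hterm)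
    have h2' : ∑ i ∈ Finset.range (d+1), C * |B| ^ K * |A| ^ i
        ≤ (d+1) * (C * |B| ^ K * |A| ^ d) := by
      calc ∑ i ∈ Finset.range (d+1), C * |B| ^ K * |A| ^ i
          ≤ ∑ _i ∈ Finset.range (d+1), C * |B| ^ K * |A| ^ d := by
            refine Finset.sum_le_sum fun i hi => ?_
            refine mul_le_mul_of_nonneg_left (pow_le_pow_right₀ hA0 ?_) ?_
            · exact Nat.le_of_lt_succ (Finset.mem_range.mp hi)
            · positivity
        _ = (d+1) * (C * |B| ^ K * |A| ^ d) := by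
            rw [Finset.sum_const, Finset.card_range]; ring
    have h3' : ((d:ℤ)+1) * (C * |B| ^ K * |A| ^ d) ≤ |A| * |A| ^ d := by
      have hx : ((d:ℤ)+1) * (C * |B| ^ K) ≤ M * |B| ^ K := by rw [hM]; nlinarith
      have hx2 := hx.trans h4
      have := mul_le_mul_of_nonneg_right hx2 (pow_nonneg (abs_nonneg A) d)
      nlinarith
    calc |v| ≤ ∑ i ∈ Finset.range (d+1), C * |B| ^ K * |A| ^ i := this
      _ ≤ ((d:ℤ)+1) * (C * |B| ^ K * |A| ^ d) := by exact_mod_cast h2'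
      _ ≤ |A| * |A| ^ d := h3'
      _ = |A| ^ (d+1) := (pow_succ' |A| d).symm
  have hvltp : |v| < ((p:ℕ):ℤ) := by
    have hA1 : (1:ℤ) ≤ |A| ^ (d+1) := one_le_pow₀ hA0
    nlinarith
  -- claim 1 : v ≠ 0
  have hvne : v ≠ 0 := by
    have hsplit : v = (Q.coeff d).eval B * A ^ d
        + ∑ i ∈ Finset.range d, (Q.coeff i).eval B * A ^ i := by
      rw [hvsum, Finset.sum_range_succ]; ring
    set r : ℤ := ∑ i ∈ Finset.range d, (Q.coeff i).eval B * A ^ i with hr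
    have hgd1 : (1:ℤ) ≤ |(Q.coeff d).eval B| := Int.one_le_abs (by exact_mod_cast hgd)
    have htop : |A| ^ d ≤ |(Q.coeff d).eval B * A ^ d| := by
      rw [abs_mul, abs_pow]
      nlinarith [pow_nonneg (abs_nonneg A) d]
    have hrest : |r| < |A| ^ d := by
      rcases Nat.eq_zero_or_pos d with h0 | hdpos
      · simp [hr, h0]
      have : |r| ≤ ∑ i ∈ Finset.range d, C * |B| ^ K * |A| ^ i := by
        rw [hr]
        refine (Finset.abs_sum_le_sum_abs _ _).trans (Finset.sum_le_sum fun i hi => ?_)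
        exact hterm i (Finset.mem_range.mpr (Nat.lt_succ_of_lt (Finset.mem_range.mp hi)))
      have h2' : ∑ i ∈ Finset.range d, C * |B| ^ K * |A| ^ i
          ≤ (d:ℤ) * (C * |B| ^ K * |A| ^ (d-1)) := by
        calc ∑ i ∈ Finset.range d, C * |B| ^ K * |A| ^ i
            ≤ ∑ _i ∈ Finset.range d, C * |B| ^ K * |A| ^ (d-1) := by
              refine Finset.sum_le_sum fun i hi => ?_
              refine mul_le_mul_of_nonneg_left (pow_le_pow_right₀ hA0 ?_) (by positivity)
              have := Finset.mem_range.mp hi; omega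
          _ = (d:ℤ) * (C * |B| ^ K * |A| ^ (d-1)) := by
              rw [Finset.sum_const, Finset.card_range]; ring
      have hlt : (d:ℤ) * (C * |B| ^ K) < |A| := by
        have : (d:ℤ) * (C * |B| ^ K) < M * |B| ^ K := by
          rw [hM]; nlinarith [(by exact_mod_cast hdpos : (0:ℤ) < (d:ℤ))]
        exact lt_of_lt_of_le this h4
      have hApow : (0:ℤ) < |A| ^ (d-1) := pow_pos (lt_of_lt_of_le one_pos hA0) _
      calc |r| ≤ (d:ℤ) * (C * |B| ^ K * |A| ^ (d-1)) := this.trans h2'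
        _ = ((d:ℤ) * (C * |B| ^ K)) * |A| ^ (d-1) := by ring
        _ < |A| * |A| ^ (d-1) := by
            exact mul_lt_mul_of_pos_right hlt hApow
        _ = |A| ^ d := by
            rw [← pow_succ']; congr 1; omega
    intro hv0
    rw [hv0] at hsplit
    have : |(Q.coeff d).eval B * A ^ d| = |r| := by
      have : (Q.coeff d).eval B * A ^ d = -r := by linarith [hsplit]
      rw [this, abs_neg]
    linarith [htop, hrest, this]
  -- conclude non-divisibility
  intro hdvd
  have := Int.le_of_dvd (abs_pos.mpr hvne) ((dvd_abs _ _).mpr hdvd)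
  omega

/-- Criterion for algebraic independence: if `a_p → ∞`, `b_p → ∞`,
`a_p^d = o(p)` and `b_p^d = o(a_p)` for every `d ≥ 1`, then for every nonzero
`F ∈ ℤ[x,y]` there are infinitely many primes `p` with `F(a_p, b_p) ≢ 0 (mod p)`. -/
theorem statement12 (a b : Nat.Primes → ℤ)
    (ha : Tendsto a atTop atTop) (hb : Tendsto b atTop atTop)
    (hao : ∀ d : ℕ, 0 < d →
      (fun p : Nat.Primes => (a p : ℝ) ^ d) =o[atTop] (fun p : Nat.Primes => (p : ℝ)))
    (hbo : ∀ d : ℕ, 0 < d →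
      (fun p : Nat.Primes => (b p : ℝ) ^ d) =o[atTop] (fun p : Nat.Primes => (a p : ℝ)))
    (F : MvPolynomial (Fin 2) ℤ) (hF : F ≠ 0) :
    {p : Nat.Primes | ¬ ((p : ℕ) : ℤ) ∣ MvPolynomial.eval ![a p, b p] F}.Infinite := by
  set P : Polynomial (MvPolynomial (Fin 1) ℤ) := MvPolynomial.finSuccEquiv ℤ 1 F with hP
  have hPne : P ≠ 0 := by
    simp only [hP, ne_eq, EmbeddingLike.map_eq_zero_iff]
    exact hF
  set Q : Polynomial (Polynomial ℤ) := P.map e1 with hQdef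
  have hQne : Q ≠ 0 := fun h => hPne (Polynomial.map_injective _ e1_inj (by simpa using h))
  have hval : ∀ p : Nat.Primes, MvPolynomial.eval ![a p, b p] F
      = (Q.map (Polynomial.evalRingHom (b p))).eval (a p) := by
    intro p
    have h1 : (![a p, b p] : Fin 2 → ℤ) = Fin.cons (a p) ![b p] := rfl
    rw [h1, MvPolynomial.eval_eq_eval_mv_eval', ← hP, hQdef, Polynomial.map_map]
    have h2 : (Polynomial.evalRingHom (b p)).comp e1
        = (MvPolynomial.eval ![b p] : MvPolynomial (Fin 1) ℤ →+* ℤ) :=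
      RingHom.ext fun g => e1_eval g (b p)
    rw [h2]
  apply primes_infinite_of_eventually
  filter_upwards [keyLemma a b ha hb hao hbo Q hQne] with p hp
  simpa [hval p] using hp
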